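/- Let 𝒯 be a triangulated category with countable direct sums and let 𝔦 be an ideal compatible with countable direct sums. Then 𝒩_𝔦, the full subcategory of 𝔦-contractible objects (objects N with id_N ∈ 𝔦(N,N)), is a localising subcategory: it is closed under suspensions, exact triangles, retracts, and countable direct sums. -/

import Mathlib

open CategoryTheory Limits Pretriangulated

universe v u v' u'

/-- An ideal in a preadditive category. -/
structure CatIdeal (C : Type u) [Category.{v} C] [Preadditive C] where
  carrier : ∀ A B : C, AddSubgroup (A ⟶ B)
  comp_mem_left : ∀ {A B X : C} (f : A ⟶ B) (g : B ⟶ X),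
    f ∈ carrier A B → f ≫ g ∈ carrier A X
  comp_mem_right : ∀ {A B X : C} (h : X ⟶ A) (f : A ⟶ B),
    f ∈ carrier A B → h ≫ f ∈ carrier X B

/-- For a homological ideal `𝔦` compatible with countable direct sums in a
triangulated category with countable direct sums, the class `𝒩_𝔦` of
`𝔦`-contractible objects is localising: closed under suspensions, exact
triangles, retracts and countable direct sums. -/
theorem contractibles_localising
    (C : Type u) [Category.{v} C] [Preadditive C] [HasZeroObject C] [HasShift C ℤ]
    [∀ n : ℤ, (shiftFunctor C n).Additive] [Pretriangulated C]
    [HasCountableCoproducts C]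
    (A : Type u') [Category.{v'} A] [Abelian A]
    (F : C ⥤ A) [F.IsHomological]
    (I : CatIdeal C)
    (hker : ∀ {X Y : C} (f : X ⟶ Y), f ∈ I.carrier X Y ↔ F.map f = 0)
    -- `𝔦` is stable:
    (hshift : ∀ {X Y : C} (f : X ⟶ Y) (n : ℤ),
      f ∈ I.carrier X Y → (shiftFunctor C n).map f ∈ I.carrier (X⟦n⟧) (Y⟦n⟧))
    -- `𝔦` is compatible with countable direct sums:
    (hsum : ∀ (ι : Type) [Countable ι] (X : ι → C) (B : C) (f : (∐ X) ⟶ B),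
      ((∀ i, Sigma.ι X i ≫ f ∈ I.carrier (X i) B) ↔ f ∈ I.carrier (∐ X) B)) :
    -- closure under suspensions:
    (∀ X : C, 𝟙 X ∈ I.carrier X X → ∀ n : ℤ, 𝟙 (X⟦n⟧) ∈ I.carrier (X⟦n⟧) (X⟦n⟧)) ∧
    -- closure under exact triangles:
    (∀ T : Triangle C, T ∈ (distTriang C) →
      𝟙 T.obj₁ ∈ I.carrier T.obj₁ T.obj₁ → 𝟙 T.obj₂ ∈ I.carrier T.obj₂ T.obj₂ →
      𝟙 T.obj₃ ∈ I.carrier T.obj₃ T.obj₃) ∧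
    -- closure under retracts:
    (∀ (X Y : C), 𝟙 Y ∈ I.carrier Y Y →
      ∀ (i : X ⟶ Y) (p : Y ⟶ X), i ≫ p = 𝟙 X → 𝟙 X ∈ I.carrier X X) ∧
    -- closure under countable direct sums:
    (∀ (ι : Type) [Countable ι] (X : ι → C),
      (∀ i, 𝟙 (X i) ∈ I.carrier (X i) (X i)) → 𝟙 (∐ X) ∈ I.carrier (∐ X) (∐ X)) := by
  refine ⟨?_, ?_, ?_, ?_⟩
  · intro X hX n
    simpa using hshift (𝟙 X) n hX
  · intro T hT h1 h2
    have hT' := rot_of_distTriang T hT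
    have hex := F.map_distinguished_exact _ hT'
    have hf : F.map T.rotate.mor₁ = 0 := by
      rw [← hker]
      exact (by simpa using I.comp_mem_left (𝟙 T.obj₂) T.mor₂ h2 : T.mor₂ ∈ I.carrier T.obj₂ T.obj₃)
    have hg : F.map T.rotate.mor₂ = 0 := by
      rw [← hker]
      have := hshift (𝟙 T.obj₁) 1 h1
      simp only [CategoryTheory.Functor.map_id] at this
      exact (by simpa using I.comp_mem_right T.mor₃ _ this : T.mor₃ ∈ I.carrier T.obj₃ ((shiftFunctor C 1).obj T.obj₁))
    have hz : IsZero ((shortComplexOfDistTriangle T.rotate hT').map F).X₂ :=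
      hex.isZero_X₂ hf hg
    rw [hker]
    have : F.map (𝟙 T.obj₃) = 𝟙 (F.obj T.obj₃) := F.map_id _
    rw [this]
    exact hz.eq_of_src _ _
  · intro X Y hY i p hip
    rw [← hip]
    exact I.comp_mem_right i p (by simpa using I.comp_mem_left (𝟙 Y) p hY)
  · intro ι _ X hX
    rw [← hsum]
    intro i
    simpa using I.comp_mem_left _ (Sigma.ι X i) (hX i)
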